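/- Let Δ be an irreducible (possibly non-reduced) root system in a finite-dimensional real inner product space E. If α, β ∈ Δ and α + β ∈ Δ, then one of the following holds: (a) ‖α‖ = ‖β‖ < ‖α+β‖; (b) ‖α+β‖ = ‖α‖ < ‖β‖, or ‖α+β‖ = ‖β‖ < ‖α‖; (c) ‖α‖ = ‖β‖ = ‖α+β‖. (Lemma on root lengths, Lemma 4.3 of the paper.) -/

import Mathlib

open RealInnerProductSpace

/-- Lemma 4.3 of the paper: trichotomy of root lengths. If `α`, `β` and `α + β` are
roots of an irreducible (possibly non-reduced) root system `Δ` in a finite-dimensional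
real inner product space, then either (a) `‖α‖ = ‖β‖ < ‖α+β‖`, or
(b) `‖α+β‖ = ‖α‖ < ‖β‖` or `‖α+β‖ = ‖β‖ < ‖α‖`, or (c) all three lengths coincide. -/
theorem root_length_trichotomy {E : Type*} [NormedAddCommGroup E]
    [InnerProductSpace ℝ E] [FiniteDimensional ℝ E]
    (Δ : Finset E)
    (h0 : (0 : E) ∉ Δ)
    (hspan : Submodule.span ℝ (Δ : Set E) = ⊤)
    (hint : ∀ α ∈ Δ, ∀ β ∈ Δ, ∃ n : ℤ, 2 * ⟪β, α⟫ / ⟪α, α⟫ = (n : ℝ))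
    (hrefl : ∀ α ∈ Δ, ∀ β ∈ Δ, β - (2 * ⟪β, α⟫ / ⟪α, α⟫) • α ∈ Δ)
    (hirr : ∀ A B : Set E, (Δ : Set E) = A ∪ B → A.Nonempty → B.Nonempty →
      (∀ a ∈ A, ∀ b ∈ B, ⟪a, b⟫ = 0) → False)
    (α β : E) (hα : α ∈ Δ) (hβ : β ∈ Δ) (hαβ : α + β ∈ Δ) :
    (‖α‖ = ‖β‖ ∧ ‖β‖ < ‖α + β‖) ∨
    ((‖α + β‖ = ‖α‖ ∧ ‖α‖ < ‖β‖) ∨ (‖α + β‖ = ‖β‖ ∧ ‖β‖ < ‖α‖)) ∨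
    (‖α‖ = ‖β‖ ∧ ‖β‖ = ‖α + β‖) := by
  -- basic positivity
  have hαne : α ≠ 0 := fun h => h0 (h ▸ hα)
  have hβne : β ≠ 0 := fun h => h0 (h ▸ hβ)
  have hγne : α + β ≠ 0 := fun h => h0 (h ▸ hαβ)
  have hx : 0 < ‖α‖ := norm_pos_iff.mpr hαne
  have hy : 0 < ‖β‖ := norm_pos_iff.mpr hβne
  have hz : 0 < ‖α + β‖ := norm_pos_iff.mpr hγne
  have hx2 : 0 < ‖α‖ ^ 2 := by positivity
  have hy2 : 0 < ‖β‖ ^ 2 := by positivity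
  have hz2 : 0 < ‖α + β‖ ^ 2 := by positivity
  have hA : (⟪α, α⟫ : ℝ) = ‖α‖ ^ 2 := real_inner_self_eq_norm_sq α
  have hB : (⟪β, β⟫ : ℝ) = ‖β‖ ^ 2 := real_inner_self_eq_norm_sq β
  have hcomm : (⟪β, α⟫ : ℝ) = ⟪α, β⟫ := real_inner_comm α β
  have hC : ‖α + β‖ ^ 2 = ‖α‖ ^ 2 + 2 * ⟪α, β⟫ + ‖β‖ ^ 2 := by
    rw [← real_inner_self_eq_norm_sq (α + β), inner_add_left, inner_add_right, inner_add_right,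
      hcomm, hA, hB]
    ring
  -- Cartan integers
  obtain ⟨n₁, hn₁⟩ := hint α hα β hβ
  obtain ⟨n₂, hn₂⟩ := hint β hβ α hα
  obtain ⟨m₁, hm₁⟩ := hint (α + β) hαβ α hα
  obtain ⟨m₂, hm₂⟩ := hint (α + β) hαβ β hβ
  rw [div_eq_iff (by rw [hA]; positivity : (⟪α, α⟫ : ℝ) ≠ 0), hcomm, hA] at hn₁
  rw [div_eq_iff (by rw [hB]; positivity : (⟪β, β⟫ : ℝ) ≠ 0), hB] at hn₂
  have hCne : (⟪α + β, α + β⟫ : ℝ) ≠ 0 := by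
    rw [real_inner_self_eq_norm_sq]; positivity
  rw [div_eq_iff hCne, real_inner_self_eq_norm_sq (α + β), hC, inner_add_right, hA] at hm₁
  rw [div_eq_iff hCne, real_inner_self_eq_norm_sq (α + β), hC, inner_add_right, hcomm, hB] at hm₂
  set x := ‖α‖
  set y := ‖β‖
  set z := ‖α + β‖
  set t : ℝ := ⟪α, β⟫ with ht_def
  -- hn₁ : 2 * t = n₁ * x², hn₂ : 2 * t = n₂ * y²
  -- hm₁ : 2 * (x² + t) = m₁ * z², hm₂ : 2 * (t + y²) = m₂ * z²
  -- hC : z² = x² + 2t + y²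
  rcases le_or_gt 0 t with hpos | hneg
  · -- t ≥ 0 : case (a)
    have hm₁pos : (1 : ℤ) ≤ m₁ := by
      by_contra h
      push_neg at h
      have : (m₁ : ℝ) ≤ 0 := by exact_mod_cast (by omega : m₁ ≤ 0)
      nlinarith
    have hm₂pos : (1 : ℤ) ≤ m₂ := by
      by_contra h
      push_neg at h
      have : (m₂ : ℝ) ≤ 0 := by exact_mod_cast (by omega : m₂ ≤ 0)
      nlinarith
    have hsum : m₁ + m₂ = 2 := by
      have h2 : ((m₁ + m₂ : ℤ) : ℝ) * z ^ 2 = 2 * z ^ 2 := by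
        push_cast
        linear_combination -hm₁ - hm₂ + ((m₁ : ℝ) + (m₂ : ℝ) - 2) * hC
      have : ((m₁ + m₂ : ℤ) : ℝ) = 2 := mul_right_cancel₀ (by positivity) h2
      exact_mod_cast this
    have hm₁1 : m₁ = 1 := by omega
    have hm₂1 : m₂ = 1 := by omega
    subst hm₁1 hm₂1
    push_cast at hm₁ hm₂
    left
    have hxy : x = y := (sq_eq_sq₀ hx.le hy.le).mp (by linarith)
    exact ⟨hxy, lt_of_pow_lt_pow_left₀ 2 hz.le (by linarith)⟩
  · -- t < 0
    have hn₁neg : n₁ ≤ -1 := by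
      by_contra h
      push_neg at h
      have : (0 : ℝ) ≤ (n₁ : ℝ) := by exact_mod_cast (by omega : (0:ℤ) ≤ n₁)
      nlinarith
    have hn₂neg : n₂ ≤ -1 := by
      by_contra h
      push_neg at h
      have : (0 : ℝ) ≤ (n₂ : ℝ) := by exact_mod_cast (by omega : (0:ℤ) ≤ n₂)
      nlinarith
    rcases eq_or_lt_of_le hn₁neg with hn₁1 | hn₁2
    · -- n₁ = -1 : x² = -2t, z = y
      rw [hn₁1] at hn₁
      push_cast at hn₁
      have hzy : z = y := (sq_eq_sq₀ hz.le hy.le).mp (by linarith)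
      rcases eq_or_lt_of_le hn₂neg with hn₂1 | hn₂2
      · -- n₂ = -1 : all equal
        rw [hn₂1] at hn₂
        push_cast at hn₂
        right; right
        have hxy : x = y := (sq_eq_sq₀ hx.le hy.le).mp (by linarith)
        exact ⟨hxy, hzy.symm⟩
      · -- n₂ ≤ -2 : z = y < x
        have hn₂r : (n₂ : ℝ) ≤ -2 := by exact_mod_cast (by omega : n₂ ≤ -2)
        have hp : (n₂ : ℝ) * y ^ 2 ≤ -2 * y ^ 2 := by nlinarith [sq_nonneg y]
        right; left; right
        refine ⟨hzy, lt_of_pow_lt_pow_left₀ 2 hx.le (by linarith)⟩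
    · -- n₁ ≤ -2
      have hn₁r : (n₁ : ℝ) ≤ -2 := by exact_mod_cast (by omega : n₁ ≤ -2)
      rcases eq_or_lt_of_le hn₂neg with hn₂1 | hn₂2
      · -- n₂ = -1 : y² = -2t, z = x, x < y
        rw [hn₂1] at hn₂
        push_cast at hn₂
        have hzx : z = x := (sq_eq_sq₀ hz.le hx.le).mp (by linarith)
        have hp : (n₁ : ℝ) * x ^ 2 ≤ -2 * x ^ 2 := by nlinarith [sq_nonneg x]
        right; left; left
        refine ⟨hzx, lt_of_pow_lt_pow_left₀ 2 hy.le (by linarith)⟩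
      · -- both ≤ -2 : z² ≤ 0, contradiction
        have hn₂r : (n₂ : ℝ) ≤ -2 := by exact_mod_cast (by omega : n₂ ≤ -2)
        exfalso
        have hp1 : (n₁ : ℝ) * x ^ 2 ≤ -2 * x ^ 2 := by nlinarith [sq_nonneg x]
        have hp2 : (n₂ : ℝ) * y ^ 2 ≤ -2 * y ^ 2 := by nlinarith [sq_nonneg y]
        linarith
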